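/- Let (X, μ) be a nonatomic standard Borel probability space and let T be an aperiodic automorphism of (X, μ). Then for every sequence ψ : ℕ → ℝ with ψ(N) > 0 for all N and ψ(N) → 0, there exist a measurable set A ⊆ X with μ(A) = 1/2 and a strictly increasing sequence of positive integers N_j such that, writing f = χ_A, for every j: ‖f_{N_j}(T, ·) − 1/2‖_{L¹(μ)} ≥ 2^{−j−2} and ψ(N_j) ≤ 2^{−j−2}/j. -/

import Mathlib

open MeasureTheory Filter Set
open scoped ENNReal

/-- The Birkhoff (time) average `f_N(T, x) = (1/N) ∑_{i=1}^{N} f(T^i x)`. -/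
noncomputable def birkhoffAvg {X : Type*} (T : X → X) (f : X → ℝ) (N : ℕ) (x : X) : ℝ :=
  (N : ℝ)⁻¹ * ∑ i ∈ Finset.Icc 1 N, f (T^[i] x)

/-! ### A Sierpiński-type lemma: subsets of any prescribed measure -/

lemma exists_subset_measure_eq' {X : Type*} [MeasurableSpace X] [StandardBorelSpace X]
    (μ : Measure X) [IsFiniteMeasure μ] [NullSingletonClass μ] {s : Set X} (hs : MeasurableSet s)
    {r : ℝ≥0∞} (hr : r ≤ μ s) :
    ∃ t, t ⊆ s ∧ MeasurableSet t ∧ μ t = r := by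
  rcases eq_or_ne r (μ s) with h | hne
  · exact ⟨s, subset_rfl, hs, h.symm⟩
  rcases eq_or_ne r 0 with rfl | hr0
  · exact ⟨∅, empty_subset _, MeasurableSet.empty, measure_empty⟩
  have hrs : r < μ s := lt_of_le_of_ne hr hne
  have hs0 : μ s ≠ 0 := fun h => hr0 (le_antisymm (h ▸ hr) bot_le)
  have hstop : μ s ≠ ⊤ := measure_ne_top μ s
  have hrtop : r ≠ ⊤ := (hrs.trans_le le_top).ne
  obtain ⟨φ, hφ⟩ := MeasureTheory.exists_measurableEmbedding_real X
  set ν : Measure ℝ := (μ s)⁻¹ • ((μ.restrict s).map φ) with hν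
  have hmap : ∀ u : Set ℝ, MeasurableSet u → ((μ.restrict s).map φ) u = μ (s ∩ φ ⁻¹' u) := by
    intro u hu
    rw [Measure.map_apply hφ.measurable hu, Measure.restrict_apply (hφ.measurable hu)]
    rw [inter_comm]
  have hν_apply : ∀ u : Set ℝ, MeasurableSet u → ν u = (μ s)⁻¹ * μ (s ∩ φ ⁻¹' u) := by
    intro u hu
    rw [hν, Measure.smul_apply, smul_eq_mul, hmap u hu]
  have : IsProbabilityMeasure ν := by
    constructor
    rw [hν_apply univ MeasurableSet.univ]
    simp only [preimage_univ, inter_univ]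
    exact ENNReal.inv_mul_cancel hs0 hstop
  have : NullSingletonClass ν := by
    constructor
    intro x
    rw [hν_apply {x} (measurableSet_singleton x)]
    have : μ (s ∩ φ ⁻¹' {x}) = 0 := by
      have hsub : (s ∩ φ ⁻¹' {x}).Subsingleton := by
        intro a ha b hb
        exact hφ.injective (by simpa using ha.2.trans hb.2.symm)
      exact hsub.measure_zero μ
    rw [this, mul_zero]
  set F := ProbabilityTheory.cdf ν with hF
  have hFmono : Monotone F := ProbabilityTheory.monotone_cdf ν
  have hFcont : Continuous F := by
    rw [continuous_iff_continuousAt]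
    intro x
    rw [hFmono.continuousAt_iff_leftLim_eq_rightLim]
    have h1 : Function.rightLim F x = F x := (ProbabilityTheory.cdf ν).rightLim_eq x
    have h2 : Function.leftLim F x = F x := by
      have hsing : (ProbabilityTheory.cdf ν).measure {x} = 0 := by
        rw [ProbabilityTheory.measure_cdf]; exact measure_singleton x
      rw [StieltjesFunction.measure_singleton] at hsing
      have := hFmono.leftLim_le (le_refl x)
      have hle : F x - Function.leftLim F x ≤ 0 := by
        by_contra hpos
        push_neg at hpos
        exact (ENNReal.ofReal_pos.mpr hpos).ne' hsing
      linarith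
    rw [h1, h2]
  set r' : ℝ := (r / μ s).toReal with hr'
  have hdiv_lt : r / μ s < 1 := by
    rw [ENNReal.div_lt_iff (Or.inl hs0) (Or.inl hstop)]
    simpa using hrs
  have hdivtop : r / μ s ≠ ⊤ := (hdiv_lt.trans ENNReal.one_lt_top).ne
  have hdiv0 : r / μ s ≠ 0 := by
    rw [Ne, ENNReal.div_eq_zero_iff]
    push_neg
    exact ⟨hr0, hstop⟩
  have hr'pos : 0 < r' := ENNReal.toReal_pos hdiv0 hdivtop
  have hr'lt1 : r' < 1 := by
    have h := (ENNReal.toReal_lt_toReal hdivtop (by norm_num : (1:ℝ≥0∞) ≠ ⊤)).mpr hdiv_lt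
    rw [ENNReal.toReal_one] at h
    exact h
  obtain ⟨a, ha⟩ := (ProbabilityTheory.tendsto_cdf_atBot ν |>.eventually_lt_const hr'pos).exists
  obtain ⟨b, hb⟩ := (ProbabilityTheory.tendsto_cdf_atTop ν |>.eventually_const_lt hr'lt1).exists
  set b' := max a b with hb'
  have hab : a ≤ b' := le_max_left _ _
  have hrange : r' ∈ Icc (F a) (F b') :=
    ⟨ha.le, (hb.trans_le (hFmono (le_max_right a b))).le⟩
  obtain ⟨x, -, hFx⟩ := intermediate_value_Icc hab hFcont.continuousOn hrange
  refine ⟨s ∩ φ ⁻¹' (Iic x), inter_subset_left, hs.inter (hφ.measurable measurableSet_Iic), ?_⟩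
  have hIic : ν (Iic x) = r / μ s := by
    rw [← ProbabilityTheory.ofReal_cdf, hFx, hr', ENNReal.ofReal_toReal hdivtop]
  have happ := hν_apply (Iic x) measurableSet_Iic
  rw [hIic] at happ
  have := congrArg (fun z => μ s * z) happ
  rw [← mul_assoc, ENNReal.mul_inv_cancel hs0 hstop, one_mul] at this
  rw [← this, ENNReal.mul_div_cancel' (fun h => absurd h hs0) (fun h => absurd h hstop)]


/-! ### Towers, a Rokhlin lemma, and the Birkhoff average estimate -/

section RokhlinSection

variable {X : Type*} [MeasurableSpace X]

/-- Level `i` of a tower over `S`: the set `T^i S`, described as `(T⁻¹)^{-i}` preimage. -/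
def Lv (T : X ≃ᵐ X) (i : ℕ) (S : Set X) : Set X := (⇑T.symm)^[i] ⁻¹' S

/-- `B` is the base of a tower of height `n`: the iterates `T^k B`, `0 ≤ k < n`,
are pairwise disjoint. -/
def RTower (T : X ≃ᵐ X) (n : ℕ) (B : Set X) : Prop :=
  ∀ k, 1 ≤ k → k < n → B ∩ (⇑T)^[k] ⁻¹' B = ∅

lemma symm_iter_iter (T : X ≃ᵐ X) (b : ℕ) (x : X) : (⇑T.symm)^[b] ((⇑T)^[b] x) = x :=
  (Function.LeftInverse.iterate T.symm_apply_apply b) x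

lemma iter_symm_iter (T : X ≃ᵐ X) (b : ℕ) (x : X) : (⇑T)^[b] ((⇑T.symm)^[b] x) = x :=
  (Function.LeftInverse.iterate T.apply_symm_apply b) x

lemma symm_iter_of_le (T : X ≃ᵐ X) {a b : ℕ} (h : b ≤ a) (x : X) :
    (⇑T.symm)^[a] ((⇑T)^[b] x) = (⇑T.symm)^[a - b] x := by
  conv_lhs => rw [← Nat.sub_add_cancel h, Function.iterate_add_apply]
  rw [symm_iter_iter]

lemma symm_iter_of_ge (T : X ≃ᵐ X) {a b : ℕ} (h : a ≤ b) (x : X) :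
    (⇑T.symm)^[a] ((⇑T)^[b] x) = (⇑T)^[b - a] x := by
  have hb : (⇑T)^[b] x = (⇑T)^[a] ((⇑T)^[b - a] x) := by
    rw [← Function.iterate_add_apply, Nat.add_sub_cancel' h]
  rw [hb, symm_iter_iter]

lemma iter_symm_of_le (T : X ≃ᵐ X) {a b : ℕ} (h : b ≤ a) (x : X) :
    (⇑T)^[a] ((⇑T.symm)^[b] x) = (⇑T)^[a - b] x := by
  conv_lhs => rw [← Nat.sub_add_cancel h, Function.iterate_add_apply]
  rw [iter_symm_iter]

lemma iter_symm_of_ge (T : X ≃ᵐ X) {a b : ℕ} (h : a ≤ b) (x : X) :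
    (⇑T)^[a] ((⇑T.symm)^[b] x) = (⇑T.symm)^[b - a] x := by
  have hb : (⇑T.symm)^[b] x = (⇑T.symm)^[a] ((⇑T.symm)^[b - a] x) := by
    rw [← Function.iterate_add_apply, Nat.add_sub_cancel' h]
  rw [hb, iter_symm_iter]

lemma mem_Lv {T : X ≃ᵐ X} {i : ℕ} {S : Set X} {x : X} :
    x ∈ Lv T i S ↔ (⇑T.symm)^[i] x ∈ S := Iff.rfl

lemma Lv_mono (T : X ≃ᵐ X) (i : ℕ) {S S' : Set X} (h : S ⊆ S') : Lv T i S ⊆ Lv T i S' :=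
  preimage_mono h

lemma Lv_measurableSet (T : X ≃ᵐ X) (i : ℕ) {S : Set X} (hS : MeasurableSet S) :
    MeasurableSet (Lv T i S) :=
  (T.symm.measurable.iterate i) hS

lemma Lv_measure {μ : Measure X} {T : X ≃ᵐ X} (hT : MeasurePreserving T μ μ) (i : ℕ)
    {S : Set X} (hS : MeasurableSet S) : μ (Lv T i S) = μ S :=
  ((hT.symm T).iterate i).measure_preimage hS.nullMeasurableSet

lemma Lv_Lv (T : X ≃ᵐ X) (a b : ℕ) (S : Set X) : Lv T a (Lv T b S) = Lv T (b + a) S := by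
  ext x
  simp only [mem_Lv, Function.iterate_add_apply]

lemma iter_mem_Lv {T : X ≃ᵐ X} {i : ℕ} {S : Set X} {x : X} (h : x ∈ Lv T i S) (m : ℕ) :
    (⇑T)^[m] x ∈ Lv T (i + m) S := by
  rw [mem_Lv, symm_iter_of_le T (Nat.le_add_left m i)]
  simpa using (show (⇑T.symm)^[i] x ∈ S from h)

lemma RTower.mono {T : X ≃ᵐ X} {n : ℕ} {B B' : Set X} (h : RTower T n B) (hBB : B' ⊆ B) :
    RTower T n B' := fun k h1 h2 =>
  eq_empty_of_subset_empty ((h k h1 h2) ▸ inter_subset_inter hBB (preimage_mono hBB))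

lemma RTower.levels_disj {T : X ≃ᵐ X} {n : ℕ} {B : Set X} (h : RTower T n B)
    {i j : ℕ} (hij : i < j) (hj : j < n) : Lv T i B ∩ Lv T j B = ∅ := by
  rw [eq_empty_iff_forall_notMem]
  rintro x ⟨hxi, hxj⟩
  have h1 : (⇑T)^[j - i] ((⇑T.symm)^[j] x) = (⇑T.symm)^[i] x := by
    rw [iter_symm_of_ge T (Nat.sub_le j i), Nat.sub_sub_self hij.le]
  have : (⇑T.symm)^[j] x ∈ B ∩ (⇑T)^[j - i] ⁻¹' B :=
    ⟨hxj, by rw [Set.mem_preimage, h1]; exact hxi⟩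
  rw [h (j - i) (by omega) (by omega)] at this
  exact this

/-- From aperiodicity: every positive measure set contains a positive measure base of a
height-`n` tower. -/
lemma exists_tower_subset [StandardBorelSpace X] (μ : Measure X) (T : X ≃ᵐ X)
    (hTaper : μ {x | ∃ n, 1 ≤ n ∧ (⇑T)^[n] x = x} = 0) (n : ℕ) {W : Set X}
    (hW : MeasurableSet W) (hWpos : 0 < μ W) :
    ∃ D, D ⊆ W ∧ MeasurableSet D ∧ 0 < μ D ∧ RTower T n D := by
  -- a countable separating family of measurable sets
  obtain ⟨S, hSc, hSm, hSsep⟩ := exists_countable_separating X MeasurableSet univ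
  obtain ⟨e, he⟩ := ((hSc.insert ∅).exists_eq_range (insert_nonempty _ _))
  have hem : ∀ m, MeasurableSet (e m) := by
    intro m
    have : e m ∈ insert ∅ S := he ▸ mem_range_self m
    rcases this with h | h
    · rw [h]; exact MeasurableSet.empty
    · exact hSm _ h
  have hesep : ∀ x y : X, x ≠ y → ∃ m, ¬(x ∈ e m ↔ y ∈ e m) := by
    intro x y hxy
    by_contra hcon
    push_neg at hcon
    refine hxy (hSsep x (mem_univ x) y (mem_univ y) ?_)
    intro s hs
    have : s ∈ insert ∅ S := mem_insert_of_mem _ hs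
    rw [he] at this
    obtain ⟨m, rfl⟩ := this
    exact hcon m
  -- building blocks
  set Q : ℕ → ℕ × Bool → Set X := fun k c =>
    (if c.2 then e c.1 else (e c.1)ᶜ) ∩ (⇑T)^[k] ⁻¹' (if c.2 then (e c.1)ᶜ else e c.1) with hQ
  have hQmeas : ∀ k c, MeasurableSet (Q k c) := by
    rintro k ⟨m, b⟩
    have h1 : MeasurableSet (if b then e m else (e m)ᶜ) := by
      cases b
      · exact (hem m).compl
      · exact hem m
    have h2 : MeasurableSet (if b then (e m)ᶜ else e m) := by
      cases b
      · exact hem m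
      · exact (hem m).compl
    exact h1.inter ((T.measurable.iterate k) h2)
  have hQkey : ∀ k c, Q k c ∩ (⇑T)^[k] ⁻¹' (Q k c) = ∅ := by
    rintro k ⟨m, b⟩
    rw [eq_empty_iff_forall_notMem]
    rintro x ⟨⟨-, hx2⟩, hx3⟩
    rw [mem_preimage] at hx2
    have hx4 : (⇑T)^[k] x ∈ (if b then e m else (e m)ᶜ) := hx3.1
    cases b
    · simp only [if_neg Bool.false_ne_true] at hx2 hx4
      exact hx4 hx2
    · simp only [if_pos] at hx2 hx4
      exact hx2 hx4
  -- the countable cover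
  set D : (Fin (n - 1) → ℕ × Bool) → Set X := fun c =>
    W ∩ ⋂ i : Fin (n - 1), Q ((i : ℕ) + 1) (c i) with hD
  have hDmeas : ∀ c, MeasurableSet (D c) :=
    fun c => hW.inter (MeasurableSet.iInter fun i => hQmeas _ _)
  have hcover : W \ {x | ∃ p, 1 ≤ p ∧ (⇑T)^[p] x = x} ⊆ ⋃ c, D c := by
    rintro x ⟨hxW, hxaper⟩
    have hx : ∀ i : Fin (n - 1), ∃ p : ℕ × Bool, x ∈ Q ((i : ℕ) + 1) p := by
      intro i
      have hne : (⇑T)^[(i : ℕ) + 1] x ≠ x := by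
        intro h
        exact hxaper ⟨(i : ℕ) + 1, by omega, h⟩
      obtain ⟨m, hm⟩ := hesep x ((⇑T)^[(i : ℕ) + 1] x) (Ne.symm hne)
      by_cases hxe : x ∈ e m
      · refine ⟨(m, true), ⟨by simpa using hxe, ?_⟩⟩
        simp only [mem_preimage]
        simp only [if_pos]
        intro hmem
        exact hm ⟨fun _ => hmem, fun _ => hxe⟩
      · refine ⟨(m, false), ⟨by simpa using hxe, ?_⟩⟩
        simp only [mem_preimage, if_neg Bool.false_ne_true]
        by_contra hmem
        exact hm ⟨fun h => absurd h hxe, fun h => absurd h hmem⟩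
    choose c hc using hx
    exact mem_iUnion.2 ⟨c, hxW, mem_iInter.2 hc⟩
  have hpos : 0 < μ (⋃ c, D c) := by
    refine lt_of_lt_of_le ?_ (measure_mono hcover)
    rwa [measure_diff_null hTaper]
  have : ∃ c, 0 < μ (D c) := by
    by_contra hcon
    push_neg at hcon
    simp only [le_zero_iff] at hcon
    rw [measure_iUnion_null hcon] at hpos
    exact lt_irrefl _ hpos
  obtain ⟨c, hc⟩ := this
  refine ⟨D c, inter_subset_left, hDmeas c, hc, ?_⟩
  intro k hk1 hkn
  have hkf : k - 1 < n - 1 := by omega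
  have hsub : D c ⊆ Q k (c ⟨k - 1, hkf⟩) := by
    intro x hx
    have := (mem_iInter.1 hx.2) ⟨k - 1, hkf⟩
    simpa only [Nat.sub_add_cancel hk1] using this
  rw [eq_empty_iff_forall_notMem]
  rintro x ⟨hx1, hx2⟩
  have : x ∈ Q k (c ⟨k - 1, hkf⟩) ∩ (⇑T)^[k] ⁻¹' (Q k (c ⟨k - 1, hkf⟩)) :=
    ⟨hsub hx1, hsub hx2⟩
  rw [hQkey] at this
  exact this


/-- The union of all levels `T^i B`, `0 ≤ i < n`. -/
def RUp (T : X ≃ᵐ X) (n : ℕ) (B : Set X) : Set X := ⋃ i < n, Lv T i B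

/-- All points within "distance `< n`" (both directions) of the tower over `B`. -/
def RBlk (T : X ≃ᵐ X) (n : ℕ) (B : Set X) : Set X :=
  ⋃ a < n, ((⇑T)^[a] ⁻¹' (RUp T n B) ∪ (⇑T.symm)^[a] ⁻¹' (RUp T n B))

lemma RUp_mono (T : X ≃ᵐ X) (n : ℕ) {B B' : Set X} (h : B ⊆ B') :
    RUp T n B ⊆ RUp T n B' :=
  iUnion₂_mono fun i _ => preimage_mono h

lemma RBlk_mono (T : X ≃ᵐ X) (n : ℕ) {B B' : Set X} (h : B ⊆ B') :
    RBlk T n B ⊆ RBlk T n B' :=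
  iUnion₂_mono fun a _ =>
    union_subset_union (preimage_mono (RUp_mono T n h)) (preimage_mono (RUp_mono T n h))

lemma subset_RUp (T : X ≃ᵐ X) {n : ℕ} (hn : 1 ≤ n) (B : Set X) : B ⊆ RUp T n B := by
  intro x hx
  exact mem_iUnion₂.2 ⟨0, hn, hx⟩

lemma RUp_subset_RBlk (T : X ≃ᵐ X) {n : ℕ} (hn : 1 ≤ n) (B : Set X) :
    RUp T n B ⊆ RBlk T n B := by
  intro x hx
  exact mem_iUnion₂.2 ⟨0, hn, Or.inl (by simpa using hx)⟩

lemma RUp_measurableSet (T : X ≃ᵐ X) (n : ℕ) {B : Set X} (hB : MeasurableSet B) :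
    MeasurableSet (RUp T n B) :=
  MeasurableSet.biUnion (to_countable _) fun i _ => Lv_measurableSet T i hB

lemma RBlk_measurableSet (T : X ≃ᵐ X) (n : ℕ) {B : Set X} (hB : MeasurableSet B) :
    MeasurableSet (RBlk T n B) :=
  MeasurableSet.biUnion (to_countable _) fun a _ =>
    ((T.measurable.iterate a) (RUp_measurableSet T n hB)).union
      ((T.symm.measurable.iterate a) (RUp_measurableSet T n hB))

/-- Extending a tower base by a compatible new piece. -/
lemma tower_union {T : X ≃ᵐ X} {n : ℕ} {B D : Set X} (hB : RTower T n B)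
    (hD : RTower T n D) (hDB : D ⊆ (RBlk T n B)ᶜ) : RTower T n (B ∪ D) := by
  intro k hk1 hkn
  rw [eq_empty_iff_forall_notMem]
  rintro x ⟨hx1, hx2⟩
  rw [mem_preimage] at hx2
  have hblk : ∀ y, y ∈ B → (⇑T)^[k] y ∈ D → False := by
    intro y hy hy2
    refine hDB hy2 (mem_iUnion₂.2 ⟨k, hkn, Or.inr ?_⟩)
    rw [mem_preimage, symm_iter_iter]
    exact subset_RUp T (by omega) B hy
  have hblk2 : ∀ y, y ∈ D → (⇑T)^[k] y ∈ B → False := by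
    intro y hy hy2
    refine hDB hy (mem_iUnion₂.2 ⟨k, hkn, Or.inl ?_⟩)
    rw [mem_preimage]
    exact subset_RUp T (by omega) B hy2
  rcases hx1 with h1 | h1 <;> rcases hx2 with h2 | h2
  · exact (eq_empty_iff_forall_notMem.1 (hB k hk1 hkn)) x ⟨h1, h2⟩
  · exact hblk x h1 h2
  · exact hblk2 x h1 h2
  · exact (eq_empty_iff_forall_notMem.1 (hD k hk1 hkn)) x ⟨h1, h2⟩

/-- The exhaustion argument: a maximal tower, whose `(2n-1)`-neighborhood covers a.e. point. -/
lemma exists_maximal_tower [StandardBorelSpace X] (μ : Measure X) [IsProbabilityMeasure μ]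
    (T : X ≃ᵐ X) (hTaper : μ {x | ∃ n, 1 ≤ n ∧ (⇑T)^[n] x = x} = 0) {n : ℕ} (hn : 1 ≤ n) :
    ∃ B, MeasurableSet B ∧ RTower T n B ∧ μ ((RBlk T n B)ᶜ) = 0 := by
  classical
  -- the "good extension" predicate and the greedy supremum
  set Ext : Set X → Set X → Prop := fun B D =>
    MeasurableSet D ∧ D ⊆ (RBlk T n B)ᶜ ∧ RTower T n D with hExt
  set cS : Set X → ℝ≥0∞ := fun B => ⨆ (D : Set X) (_ : Ext B D), μ D with hcS
  have hspec : ∀ B : Set X, ∃ D, Ext B D ∧ cS B ≤ 2 * μ D := by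
    intro B
    rcases eq_or_ne (cS B) 0 with h0 | h0
    · exact ⟨∅, ⟨MeasurableSet.empty, empty_subset _,
        fun k _ _ => by simp⟩, by simp [h0]⟩
    · have hlt : cS B ≠ ⊤ := by
        have : cS B ≤ 1 := by
          refine iSup_le fun D => iSup_le fun _ => ?_
          exact (measure_mono (subset_univ D)).trans (by simp)
        exact (this.trans_lt ENNReal.one_lt_top).ne
      have hhalf : cS B / 2 < cS B := ENNReal.half_lt_self h0 hlt
      by_contra hcon
      push_neg at hcon
      have : cS B ≤ cS B / 2 := by
        refine iSup_le fun D => iSup_le fun hD => ?_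
        have := hcon D hD
        rw [ENNReal.le_div_iff_mul_le (Or.inl (by norm_num)) (Or.inl (by norm_num))]
        calc μ D * 2 = 2 * μ D := mul_comm _ _
          _ ≤ cS B := le_of_lt this
      exact absurd this (not_le.2 hhalf)
  choose pick hpickExt hpickBound using hspec
  -- the greedy sequence
  set seq : ℕ → Set X := fun m => Nat.rec ∅ (fun _ B => B ∪ pick B) m with hseq
  have hseq_succ : ∀ m, seq (m + 1) = seq m ∪ pick (seq m) := fun m => rfl
  have hseq_zero : seq 0 = ∅ := rfl
  have hseq_basic : ∀ m, MeasurableSet (seq m) ∧ RTower T n (seq m) := by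
    intro m
    induction m with
    | zero =>
      rw [hseq_zero]
      exact ⟨MeasurableSet.empty, fun k _ _ => empty_inter _⟩
    | succ m ih =>
      rw [hseq_succ]
      obtain ⟨hE1, hE2, hE3⟩ := hpickExt (seq m)
      exact ⟨ih.1.union hE1, tower_union ih.2 hE3 hE2⟩
  have hseq_mono : Monotone seq :=
    monotone_nat_of_le_succ fun m => by rw [hseq_succ]; exact subset_union_left
  set B : Set X := ⋃ m, seq m with hB
  have hBmeas : MeasurableSet B := MeasurableSet.iUnion fun m => (hseq_basic m).1
  have hBtower : RTower T n B := by
    intro k hk1 hkn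
    rw [eq_empty_iff_forall_notMem]
    rintro x ⟨hx1, hx2⟩
    rw [mem_preimage] at hx2
    obtain ⟨m1, hm1⟩ := mem_iUnion.1 hx1
    obtain ⟨m2, hm2⟩ := mem_iUnion.1 hx2
    have h1 : x ∈ seq (max m1 m2) := hseq_mono (le_max_left m1 m2) hm1
    have h2 : (⇑T)^[k] x ∈ seq (max m1 m2) := hseq_mono (le_max_right m1 m2) hm2
    exact (eq_empty_iff_forall_notMem.1 ((hseq_basic _).2 k hk1 hkn)) x ⟨h1, h2⟩
  refine ⟨B, hBmeas, hBtower, ?_⟩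
  by_contra hres
  have hrespos : 0 < μ ((RBlk T n B)ᶜ) := pos_iff_ne_zero.2 hres
  obtain ⟨D, hDsub, hDmeas, hDpos, hDtower⟩ :=
    exists_tower_subset μ T hTaper n (RBlk_measurableSet T n hBmeas).compl hrespos
  -- D is a candidate for every step
  have hDext : ∀ m, Ext (seq m) D := by
    intro m
    refine ⟨hDmeas, ?_, hDtower⟩
    refine hDsub.trans (compl_subset_compl.2 (RBlk_mono T n ?_))
    exact le_iSup (fun m => seq m) m
  have hDbound : ∀ m, μ D ≤ 2 * μ (pick (seq m)) := by
    intro m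
    refine le_trans ?_ (hpickBound (seq m))
    exact le_trans (le_iSup₂_of_le D (hDext m) le_rfl) le_rfl
  -- the picks are pairwise disjoint
  have hpick_disj : Pairwise (Function.onFun Disjoint fun m => pick (seq m)) := by
    have key : ∀ m m', m < m' → Disjoint (pick (seq m)) (pick (seq m')) := by
      intro m m' hmm
      rw [Set.disjoint_left]
      intro x hx hx'
      have h1 : x ∈ seq (m + 1) := by rw [hseq_succ]; exact Or.inr hx
      have h2 : x ∈ seq m' := hseq_mono (Nat.succ_le_of_lt hmm) h1
      have h3 : x ∈ RBlk T n (seq m') :=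
        RUp_subset_RBlk T hn _ (subset_RUp T hn _ h2)
      exact (hpickExt (seq m')).2.1 hx' h3
    intro m m' hne
    rcases lt_or_gt_of_ne hne with h | h
    · exact key m m' h
    · exact (key m' m h).symm
  have hsum : ∑' m : ℕ, μ (pick (seq m)) = μ (⋃ m, pick (seq m)) :=
    (measure_iUnion hpick_disj fun m => (hpickExt (seq m)).1).symm
  have hhalf_le : ∀ m, μ D / 2 ≤ μ (pick (seq m)) := by
    intro m
    rw [ENNReal.div_le_iff_le_mul (Or.inl (by norm_num)) (Or.inl (by norm_num))]
    calc μ D ≤ 2 * μ (pick (seq m)) := hDbound m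
      _ = μ (pick (seq m)) * 2 := mul_comm _ _
  have htop : (⊤ : ℝ≥0∞) ≤ μ (⋃ m, pick (seq m)) := by
    rw [← hsum]
    calc (⊤ : ℝ≥0∞) = ∑' _ : ℕ, μ D / 2 :=
          (ENNReal.tsum_const_eq_top_of_ne_zero (by
            simp only [Ne, ENNReal.div_eq_zero_iff, not_or]
            exact ⟨hDpos.ne', by norm_num⟩)).symm
      _ ≤ ∑' m : ℕ, μ (pick (seq m)) := ENNReal.tsum_le_tsum hhalf_le
  have hle1 : μ (⋃ m, pick (seq m)) ≤ 1 := prob_le_one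
  exact absurd (htop.trans hle1) (by norm_num)


/-- The measure of a height-`m` tower over `B` is `m * μ B`. -/
lemma tower_measure_eq {μ : Measure X} {T : X ≃ᵐ X}
    (hT : MeasurePreserving T μ μ) {m : ℕ} {B : Set X} (hB : MeasurableSet B)
    (htow : RTower T m B) :
    μ (⋃ i ∈ Finset.range m, Lv T i B) = (m : ℝ≥0∞) * μ B := by
  have hdisj : (↑(Finset.range m) : Set ℕ).Pairwise
      (Function.onFun Disjoint fun i => Lv T i B) := by
    intro i hi j hj hij
    rw [Finset.coe_range, mem_Iio] at hi hj
    rw [Function.onFun, Set.disjoint_iff_inter_eq_empty]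
    rcases lt_or_gt_of_ne hij with h | h
    · exact htow.levels_disj h hj
    · rw [inter_comm]; exact htow.levels_disj h hi
  have heq := measure_biUnion_finset (μ := μ) hdisj fun i _ => Lv_measurableSet T i hB
  rw [heq, Finset.sum_congr rfl fun i _ => Lv_measure hT i hB, Finset.sum_const,
    Finset.card_range, nsmul_eq_mul]

lemma tower_measure_le {μ : Measure X} [IsProbabilityMeasure μ] {T : X ≃ᵐ X}
    (hT : MeasurePreserving T μ μ) {m : ℕ} {B : Set X} (hB : MeasurableSet B)
    (htow : RTower T m B) : (m : ℝ≥0∞) * μ B ≤ 1 :=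
  (tower_measure_eq hT hB htow) ▸ prob_le_one

/-- **Rokhlin's lemma** (weak form, coverage ≥ 1/2). -/
lemma rokhlin [StandardBorelSpace X] (μ : Measure X) [IsProbabilityMeasure μ]
    (T : X ≃ᵐ X) (hT : MeasurePreserving T μ μ)
    (hTaper : μ {x | ∃ n, 1 ≤ n ∧ (⇑T)^[n] x = x} = 0) {n : ℕ} (hn : 1 ≤ n) :
    ∃ F, MeasurableSet F ∧ RTower T n F ∧ (2 * (n : ℝ≥0∞))⁻¹ ≤ μ F := by
  classical
  set L := 2 * n with hLdef
  have hL : 1 ≤ L := by omega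
  obtain ⟨C, hCmeas, hCtower, hCnull⟩ := exists_maximal_tower μ T hTaper (n := L) hL
  set R := 4 * L with hRdef
  set Z := (RBlk T L C)ᶜ with hZdef
  have hZmeas : MeasurableSet Z := (RBlk_measurableSet T L hCmeas).compl
  have hZ0 : μ Z = 0 := hCnull
  set N0 : Set X := (⋃ m, (⇑T)^[m] ⁻¹' Z) ∪ ⋃ m, (⇑T.symm)^[m] ⁻¹' Z with hN0def
  have hN0 : μ N0 = 0 := by
    refine measure_union_null (measure_iUnion_null fun m => ?_) (measure_iUnion_null fun m => ?_)
    · exact ((hT.iterate m).measure_preimage hZmeas.nullMeasurableSet).trans hZ0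
    · exact (((hT.symm T).iterate m).measure_preimage hZmeas.nullMeasurableSet).trans hZ0
  have hblk : ∀ y, y ∉ Z → ∃ a, a < L ∧ ∃ i, i < L ∧
      ((⇑T.symm)^[i] ((⇑T)^[a] y) ∈ C ∨ (⇑T.symm)^[i + a] y ∈ C) := by
    intro y hy
    rw [hZdef, Set.notMem_compl_iff] at hy
    obtain ⟨a, ha, hy2⟩ := mem_iUnion₂.1 hy
    rcases hy2 with h | h
    · rw [mem_preimage] at h
      obtain ⟨i, hi, h3⟩ := mem_iUnion₂.1 h
      exact ⟨a, ha, i, hi, Or.inl h3⟩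
    · rw [mem_preimage] at h
      obtain ⟨i, hi, h3⟩ := mem_iUnion₂.1 h
      refine ⟨a, ha, i, hi, Or.inr ?_⟩
      rw [Function.iterate_add_apply]
      exact h3
  have hfwd : ∀ x, x ∉ N0 → ∃ κ, 1 ≤ κ ∧ κ ≤ R ∧ (⇑T)^[κ] x ∈ C := by
    intro x hx
    have h2L : (⇑T)^[2*L] x ∉ Z := fun h => hx (Or.inl (mem_iUnion.2 ⟨2*L, h⟩))
    obtain ⟨a, ha, i, hi, hcase⟩ := hblk _ h2L
    rcases hcase with h | h
    · rw [← Function.iterate_add_apply, symm_iter_of_ge T (by omega)] at h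
      exact ⟨a + 2*L - i, by omega, by omega, h⟩
    · rw [symm_iter_of_ge T (by omega : i + a ≤ 2*L)] at h
      exact ⟨2*L - (i + a), by omega, by omega, h⟩
  have hbwd : ∀ x, x ∉ N0 → ∃ b, b ≤ R ∧ (⇑T.symm)^[b] x ∈ C := by
    intro x hx
    have h2L : (⇑T.symm)^[2*L] x ∉ Z := fun h => hx (Or.inr (mem_iUnion.2 ⟨2*L, h⟩))
    obtain ⟨a, ha, i, hi, hcase⟩ := hblk _ h2L
    rcases hcase with h | h
    · rw [iter_symm_of_ge T (by omega : a ≤ 2*L), ← Function.iterate_add_apply] at h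
      exact ⟨i + (2*L - a), by omega, h⟩
    · rw [← Function.iterate_add_apply] at h
      exact ⟨i + a + 2*L, by omega, h⟩
  have hinv : ∀ x, x ∉ N0 → ∀ b, (⇑T.symm)^[b] x ∉ N0 := by
    intro x hx b hmem
    rcases hmem with h | h
    · obtain ⟨m, hm⟩ := mem_iUnion.1 h
      rw [mem_preimage] at hm
      rcases le_or_gt b m with hbm | hbm
      · rw [iter_symm_of_le T hbm] at hm
        exact hx (Or.inl (mem_iUnion.2 ⟨m - b, hm⟩))
      · rw [iter_symm_of_ge T hbm.le] at hm
        exact hx (Or.inr (mem_iUnion.2 ⟨b - m, hm⟩))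
    · obtain ⟨m, hm⟩ := mem_iUnion.1 h
      rw [mem_preimage, ← Function.iterate_add_apply] at hm
      exact hx (Or.inr (mem_iUnion.2 ⟨m + b, hm⟩))
  -- first-return decomposition of C
  set CC : ℕ → Set X := fun k =>
    (C ∩ (⇑T)^[k] ⁻¹' C) ∩ ⋂ l ∈ Finset.Ico 1 k, ((⇑T)^[l] ⁻¹' C)ᶜ with hCCdef
  have hCCmeas : ∀ k, MeasurableSet (CC k) := by
    intro k
    refine (hCmeas.inter ((T.measurable.iterate k) hCmeas)).inter ?_
    exact MeasurableSet.biInter (to_countable _)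
      (fun l _ => ((T.measurable.iterate l) hCmeas).compl)
  have hCCsub : ∀ k, CC k ⊆ C := fun k => inter_subset_left.trans inter_subset_left
  have hCC_ret : ∀ k x, x ∈ CC k → (⇑T)^[k] x ∈ C := fun k x hx => hx.1.2
  have hCC_min : ∀ k x, x ∈ CC k → ∀ l, 1 ≤ l → l < k → (⇑T)^[l] x ∉ C := by
    intro k x hx l h1 h2
    have := (mem_iInter₂.1 hx.2) l (Finset.mem_Ico.2 ⟨h1, h2⟩)
    exact this
  have hCCd : ∀ k k', 1 ≤ k → k < k' → ∀ x, x ∈ CC k → x ∈ CC k' → False := by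
    intro k k' h1 h2 x hx hx'
    exact hCC_min k' x hx' k h1 h2 (hCC_ret k x hx)
  have hCCdisj : ∀ k k', 1 ≤ k → 1 ≤ k' → k ≠ k' → ∀ x, x ∈ CC k → x ∈ CC k' → False := by
    intro k k' h1 h1' hne x hx hx'
    rcases lt_or_gt_of_ne hne with h | h
    · exact hCCd k k' h1 h x hx hx'
    · exact hCCd k' k h1' h x hx' hx
  have hCc : ∀ x, x ∈ C → x ∉ N0 → ∃ k, 1 ≤ k ∧ k ≤ R ∧ x ∈ CC k := by
    intro x hxC hxN
    obtain ⟨κ, hκ1, hκR, hκC⟩ := hfwd x hxN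
    have hex : ∃ k, 1 ≤ k ∧ (⇑T)^[k] x ∈ C := ⟨κ, hκ1, hκC⟩
    have hkspec := Nat.find_spec hex
    have hkle : Nat.find hex ≤ κ := Nat.find_min' hex ⟨hκ1, hκC⟩
    refine ⟨Nat.find hex, hkspec.1, hkle.trans hκR, ⟨hxC, hkspec.2⟩, ?_⟩
    refine mem_iInter₂.2 fun l hl => ?_
    rw [Finset.mem_Ico] at hl
    intro hlC
    exact Nat.find_min hex hl.2 ⟨hl.1, hlC⟩
  -- the Rokhlin base
  set F : Set X :=
    ⋃ (k : ℕ) (_ : 1 ≤ k ∧ k ≤ R) (j : ℕ) (_ : (j+1)*n ≤ k), Lv T (j*n) (CC k) with hFdef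
  have hFmeas : MeasurableSet F := by
    refine MeasurableSet.iUnion fun k => MeasurableSet.iUnion fun _ => ?_
    exact MeasurableSet.iUnion fun j => MeasurableSet.iUnion fun _ =>
      Lv_measurableSet T _ (hCCmeas k)
  have hFtower : RTower T n F := by
    intro κ hκ1 hκn
    rw [eq_empty_iff_forall_notMem]
    rintro x ⟨hx1, hx2⟩
    rw [mem_preimage] at hx2
    simp only [hFdef, mem_iUnion] at hx1 hx2
    obtain ⟨k, ⟨hk1, hkR⟩, j, hj, hx1⟩ := hx1
    obtain ⟨k', ⟨hk'1, hk'R⟩, j', hj', hx2⟩ := hx2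
    rw [Nat.succ_mul] at hj hj'
    have hy : (⇑T.symm)^[j*n] x ∈ CC k := hx1
    have hz : (⇑T.symm)^[j'*n] ((⇑T)^[κ] x) ∈ CC k' := hx2
    have hxy : x = (⇑T)^[j*n] ((⇑T.symm)^[j*n] x) := (iter_symm_iter T _ x).symm
    have hTx : (⇑T)^[κ] x = (⇑T)^[κ + j*n] ((⇑T.symm)^[j*n] x) := by
      conv_lhs => rw [hxy]
      rw [← Function.iterate_add_apply]
    rcases le_or_gt (j'*n) (κ + j*n) with hba | hba
    · have hz2 : (⇑T)^[κ + j*n - j'*n] ((⇑T.symm)^[j*n] x) ∈ CC k' := by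
        rw [← symm_iter_of_ge T hba, ← hTx]; exact hz
      rcases eq_or_lt_of_le hba with heq | hlt2
      · -- j'*n = κ + j*n, impossible: 1 ≤ κ < n
        have hjj' : j < j' := by
          by_contra hcon
          push_neg at hcon
          have : j'*n ≤ j*n := Nat.mul_le_mul_right n hcon
          omega
        have : (j+1)*n ≤ j'*n := Nat.mul_le_mul_right n (by omega)
        rw [Nat.succ_mul] at this
        omega
      · refine hCC_min k _ hy (κ + j*n - j'*n) (by omega) (by omega) ?_
        exact hCCsub k' hz2
    · have hyz : (⇑T)^[j'*n - (κ + j*n)] ((⇑T.symm)^[j'*n] ((⇑T)^[κ] x))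
          = (⇑T.symm)^[j*n] x := by
        have hzy : (⇑T.symm)^[j'*n] ((⇑T)^[κ] x)
            = (⇑T.symm)^[j'*n - (κ + j*n)] ((⇑T.symm)^[j*n] x) := by
          rw [hTx, symm_iter_of_le T hba.le]
        rw [hzy, iter_symm_iter]
      refine hCC_min k' _ hz (j'*n - (κ + j*n)) (by omega) (by omega) ?_
      rw [hyz]
      exact hCCsub k hy
  -- a.e. covering by the Kakutani columns
  set K : Set X := ⋃ (k : ℕ) (_ : 1 ≤ k ∧ k ≤ R) (l : ℕ) (_ : l < k), Lv T l (CC k) with hKdef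
  have hK : ∀ x, x ∉ N0 → x ∈ K := by
    intro x hx
    obtain ⟨b0, hb0R, hb0C⟩ := hbwd x hx
    have hexB : ∃ b, (⇑T.symm)^[b] x ∈ C := ⟨b0, hb0C⟩
    set b := Nat.find hexB with hbdef
    have hbC : (⇑T.symm)^[b] x ∈ C := Nat.find_spec hexB
    have hbR : b ≤ R := (Nat.find_min' hexB hb0C).trans hb0R
    obtain ⟨k, hk1, hkR, hkCC⟩ := hCc _ hbC (hinv x hx b)
    have hbk : b < k := by
      by_contra hcon
      push_neg at hcon
      have h1 : (⇑T)^[k] ((⇑T.symm)^[b] x) ∈ C := hCC_ret k _ hkCC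
      rw [iter_symm_of_ge T hcon] at h1
      exact Nat.find_min hexB (by omega) h1
    simp only [hKdef, mem_iUnion]
    exact ⟨k, ⟨hk1, hkR⟩, b, hbk, hkCC⟩
  -- covered and uncovered parts
  set covered : Set X := ⋃ (i : ℕ) (_ : i < n), Lv T i F with hcovdef
  set uncov : Set X :=
    ⋃ k ∈ Finset.Icc 1 R, ⋃ l ∈ Finset.Ico (n*(k/n)) k, Lv T l (CC k) with huncovdef
  have hsplit : K ⊆ covered ∪ uncov := by
    intro x hx
    simp only [hKdef, mem_iUnion] at hx
    obtain ⟨k, ⟨hk1, hkR⟩, l, hlk, hxl⟩ := hx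
    by_cases h : (l/n + 1)*n ≤ k
    · left
      have hmem : x ∈ Lv T (l % n) (Lv T ((l/n)*n) (CC k)) := by
        rw [Lv_Lv]
        have : (l/n)*n + l % n = l := by
          rw [mul_comm]
          exact Nat.div_add_mod l n
        rw [this]
        exact hxl
      have hsubF : Lv T ((l/n)*n) (CC k) ⊆ F := by
        intro y hy
        simp only [hFdef, mem_iUnion]
        exact ⟨k, ⟨hk1, hkR⟩, l/n, h, hy⟩
      simp only [hcovdef, mem_iUnion]
      exact ⟨l % n, Nat.mod_lt l (by omega), Lv_mono T _ hsubF hmem⟩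
    · right
      have hnl : n*(k/n) ≤ l := by
        by_contra hcon
        push_neg at hcon
        have h1 : ¬ (k/n ≤ l/n) := by
          intro hle
          have := Nat.mul_le_mul_left n hle
          have h2 : n * (l/n) ≤ l := Nat.mul_div_le l n
          omega
        push_neg at h1
        have h2 : l/n + 1 ≤ k/n := h1
        have h3 : (l/n + 1)*n ≤ (k/n)*n := Nat.mul_le_mul_right n h2
        have h4 : (k/n)*n ≤ k := Nat.div_mul_le_self k n
        omega
      simp only [huncovdef, mem_iUnion]
      exact ⟨k, Finset.mem_Icc.2 ⟨hk1, hkR⟩, l, Finset.mem_Ico.2 ⟨hnl, hlk⟩, hxl⟩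
  -- measure bookkeeping
  have hn0 : (n : ℝ≥0∞) ≠ 0 := Nat.cast_ne_zero.2 (by omega)
  have hnt : (n : ℝ≥0∞) ≠ ⊤ := ENNReal.natCast_ne_top n
  have hcov_eq : covered = ⋃ i ∈ Finset.range n, Lv T i F := by
    ext x
    simp [hcovdef, Finset.mem_range]
  have hcovered : μ covered = (n : ℝ≥0∞) * μ F := by
    rw [hcov_eq]
    exact tower_measure_eq hT hFmeas hFtower
  -- the uncovered part has measure at most (n-1) μ C
  have huncov_le : μ uncov ≤ (↑(n - 1) : ℝ≥0∞) * μ C := by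
    have step1 : μ uncov ≤
        ∑ k ∈ Finset.Icc 1 R, μ (⋃ l ∈ Finset.Ico (n*(k/n)) k, Lv T l (CC k)) :=
      measure_biUnion_finset_le _ _
    have step2 : ∀ k ∈ Finset.Icc 1 R,
        μ (⋃ l ∈ Finset.Ico (n*(k/n)) k, Lv T l (CC k)) ≤ (↑(n - 1) : ℝ≥0∞) * μ (CC k) := by
      intro k _
      calc μ (⋃ l ∈ Finset.Ico (n*(k/n)) k, Lv T l (CC k))
          ≤ ∑ l ∈ Finset.Ico (n*(k/n)) k, μ (Lv T l (CC k)) := measure_biUnion_finset_le _ _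
        _ = ∑ l ∈ Finset.Ico (n*(k/n)) k, μ (CC k) :=
            Finset.sum_congr rfl fun l _ => Lv_measure hT l (hCCmeas k)
        _ = (↑(k - n*(k/n)) : ℝ≥0∞) * μ (CC k) := by
            rw [Finset.sum_const, Nat.card_Ico, nsmul_eq_mul]
        _ ≤ (↑(n - 1) : ℝ≥0∞) * μ (CC k) := by
            refine mul_le_mul_left (Nat.cast_le.2 ?_) _
            have h1 : n * (k/n) + k % n = k := Nat.div_add_mod k n
            have h2 : k % n < n := Nat.mod_lt k (by omega)
            omega
    have step3 : ∑ k ∈ Finset.Icc 1 R, (↑(n - 1) : ℝ≥0∞) * μ (CC k)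
        = (↑(n - 1) : ℝ≥0∞) * ∑ k ∈ Finset.Icc 1 R, μ (CC k) := by
      rw [Finset.mul_sum]
    have hCCpair : (↑(Finset.Icc 1 R) : Set ℕ).Pairwise
        (Function.onFun Disjoint fun k => CC k) := by
      intro k hk k' hk' hne
      rw [Finset.coe_Icc, mem_Icc] at hk hk'
      rw [Function.onFun, Set.disjoint_left]
      intro x hx hx'
      exact hCCdisj k k' hk.1 hk'.1 hne x hx hx'
    have step4 : ∑ k ∈ Finset.Icc 1 R, μ (CC k) ≤ μ C := by
      rw [← measure_biUnion_finset hCCpair fun k _ => hCCmeas k]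
      exact measure_mono (iUnion₂_subset fun k _ => hCCsub k)
    calc μ uncov ≤ ∑ k ∈ Finset.Icc 1 R, μ (⋃ l ∈ Finset.Ico (n*(k/n)) k, Lv T l (CC k)) := step1
      _ ≤ ∑ k ∈ Finset.Icc 1 R, (↑(n - 1) : ℝ≥0∞) * μ (CC k) := Finset.sum_le_sum step2
      _ = (↑(n - 1) : ℝ≥0∞) * ∑ k ∈ Finset.Icc 1 R, μ (CC k) := step3
      _ ≤ (↑(n - 1) : ℝ≥0∞) * μ C := mul_le_mul_right step4 _
  -- μ C ≤ L⁻¹ and hence the uncovered part has measure ≤ 1/2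
  have hLM : ((L : ℕ) : ℝ≥0∞) * μ C ≤ 1 := tower_measure_le hT hCmeas hCtower
  have hCsmall : μ C ≤ ((L : ℕ) : ℝ≥0∞)⁻¹ := by
    rw [ENNReal.le_inv_iff_mul_le]
    rw [mul_comm]
    exact hLM
  have hL2n : ((L : ℕ) : ℝ≥0∞) = 2 * (n : ℝ≥0∞) := by
    rw [hLdef]
    push_cast
    ring
  have hhalf : (↑(n - 1) : ℝ≥0∞) * μ C ≤ 2⁻¹ := by
    calc (↑(n - 1) : ℝ≥0∞) * μ C ≤ (n : ℝ≥0∞) * ((L : ℕ) : ℝ≥0∞)⁻¹ :=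
          mul_le_mul' (Nat.cast_le.2 (by omega)) hCsmall
      _ = (n : ℝ≥0∞) * ((2 : ℝ≥0∞) * (n:ℝ≥0∞))⁻¹ := by rw [hL2n]
      _ = 2⁻¹ := by
          rw [ENNReal.mul_inv (Or.inl (by norm_num)) (Or.inl (by norm_num))]
          rw [← mul_assoc, mul_comm (n : ℝ≥0∞) (2:ℝ≥0∞)⁻¹, mul_assoc,
            ENNReal.mul_inv_cancel hn0 hnt, mul_one]
  have hcover_all : (univ : Set X) ⊆ N0 ∪ (covered ∪ uncov) := by
    intro x _
    by_cases hx : x ∈ N0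
    · exact Or.inl hx
    · exact Or.inr (hsplit (hK x hx))
  have hone : (1 : ℝ≥0∞) ≤ (n : ℝ≥0∞) * μ F + 2⁻¹ := by
    calc (1 : ℝ≥0∞) = μ (univ : Set X) := measure_univ.symm
      _ ≤ μ (N0 ∪ (covered ∪ uncov)) := measure_mono hcover_all
      _ ≤ μ N0 + μ (covered ∪ uncov) := measure_union_le _ _
      _ ≤ μ N0 + (μ covered + μ uncov) := by
          exact add_le_add le_rfl (measure_union_le _ _)
      _ = μ covered + μ uncov := by rw [hN0, zero_add]
      _ ≤ (n : ℝ≥0∞) * μ F + 2⁻¹ := by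
          rw [hcovered]
          exact add_le_add le_rfl (huncov_le.trans hhalf)
  have h2 : (2 : ℝ≥0∞)⁻¹ ≤ (n : ℝ≥0∞) * μ F := by
    have hsum : (2 : ℝ≥0∞)⁻¹ + 2⁻¹ ≤ (n : ℝ≥0∞) * μ F + 2⁻¹ := by
      rw [ENNReal.inv_two_add_inv_two]
      exact hone
    exact (ENNReal.add_le_add_iff_right (by norm_num)).1 hsum
  refine ⟨F, hFmeas, hFtower, ?_⟩
  calc (2 * (n : ℝ≥0∞))⁻¹ = (n : ℝ≥0∞)⁻¹ * 2⁻¹ := by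
        rw [ENNReal.mul_inv (Or.inl (by norm_num)) (Or.inl (by norm_num)), mul_comm]
    _ ≤ (n : ℝ≥0∞)⁻¹ * ((n : ℝ≥0∞) * μ F) := mul_le_mul_right h2 _
    _ = μ F := by rw [← mul_assoc, ENNReal.inv_mul_cancel hn0 hnt, one_mul]


end RokhlinSection

/-- The main quantitative lower bound: if the `n` forward iterates of every point of `G`
lie in `A`, a set of measure `1/2`, then the `L¹`-distance of the Birkhoff average from `1/2`
is at least `μ G`. -/
lemma birkhoff_L1_lower {X : Type*} [MeasurableSpace X] (μ : Measure X) [IsProbabilityMeasure μ]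
    (T : X ≃ᵐ X) (hT : MeasurePreserving T μ μ) {A G : Set X} (hA : MeasurableSet A)
    (hAhalf : μ A = 1/2) (hG : MeasurableSet G) {n : ℕ} (hn : 1 ≤ n)
    (hGA : ∀ x ∈ G, ∀ i, 1 ≤ i → i ≤ n → (⇑T)^[i] x ∈ A) :
    (μ G).toReal ≤ ∫ x, |birkhoffAvg T (A.indicator fun _ => (1:ℝ)) n x - 1/2| ∂μ := by
  classical
  set f : X → ℝ := A.indicator fun _ => (1:ℝ) with hfdef
  have hfi : ∀ i : ℕ, (fun x => f ((⇑T)^[i] x))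
      = ((⇑T)^[i] ⁻¹' A).indicator (fun _ => (1:ℝ)) := by
    intro i
    ext x
    simp only [hfdef, Set.indicator_apply, mem_preimage]
  have hmeas_pre : ∀ i : ℕ, MeasurableSet ((⇑T)^[i] ⁻¹' A) :=
    fun i => (T.measurable.iterate i) hA
  have hInt_fi : ∀ i : ℕ, Integrable (fun x => f ((⇑T)^[i] x)) μ := by
    intro i
    rw [hfi i]
    exact (integrable_const (1:ℝ)).indicator (hmeas_pre i)
  have hint_fi : ∀ i : ℕ, ∫ x, f ((⇑T)^[i] x) ∂μ = 1/2 := by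
    intro i
    rw [hfi i, integral_indicator_const _ (hmeas_pre i), measureReal_def,
      (hT.iterate i).measure_preimage hA.nullMeasurableSet, hAhalf]
    simp [ENNReal.toReal_div]
  have hg_eq : (fun x => birkhoffAvg T f n x)
      = fun x => (n : ℝ)⁻¹ * ∑ i ∈ Finset.Icc 1 n, f ((⇑T)^[i] x) := rfl
  have hsumInt : Integrable (fun x => ∑ i ∈ Finset.Icc 1 n, f ((⇑T)^[i] x)) μ :=
    integrable_finset_sum _ fun i _ => hInt_fi i
  have hgInt : Integrable (fun x => birkhoffAvg T f n x) μ := by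
    rw [hg_eq]
    exact hsumInt.const_mul _
  have hgval : ∫ x, birkhoffAvg T f n x ∂μ = 1/2 := by
    rw [hg_eq, integral_const_mul, integral_finset_sum _ fun i _ => hInt_fi i]
    rw [Finset.sum_congr rfl fun i _ => hint_fi i, Finset.sum_const, Nat.card_Icc]
    simp only [Nat.add_sub_cancel, nsmul_eq_mul]
    rw [← mul_assoc, inv_mul_cancel₀ (by positivity : (n:ℝ) ≠ 0), one_mul]
  set h : X → ℝ := fun x => birkhoffAvg T f n x - 1/2 with hhdef
  have hInt : Integrable h μ := hgInt.sub (integrable_const _)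
  have hint_h : ∫ x, h x ∂μ = 0 := by
    rw [hhdef]
    rw [integral_sub hgInt (integrable_const _), hgval, integral_const]
    simp
  have hposInt : Integrable (fun x => max (h x) 0) μ := hInt.pos_part
  have habs : ∀ x, |h x| = 2 * max (h x) 0 - h x := by
    intro x
    rcases le_total 0 (h x) with hx | hx
    · rw [abs_of_nonneg hx, max_eq_left hx]; ring
    · rw [abs_of_nonpos hx, max_eq_right hx]; ring
  have habs_int : ∫ x, |h x| ∂μ = 2 * ∫ x, max (h x) 0 ∂μ := by
    calc ∫ x, |h x| ∂μ = ∫ x, (2 * max (h x) 0 - h x) ∂μ := by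
          exact integral_congr_ae (Filter.Eventually.of_forall habs)
      _ = ∫ x, 2 * max (h x) 0 ∂μ - ∫ x, h x ∂μ :=
          integral_sub (hposInt.const_mul 2) hInt
      _ = 2 * ∫ x, max (h x) 0 ∂μ := by rw [integral_const_mul, hint_h, sub_zero]
  -- on G the average equals 1
  have hgone : ∀ x ∈ G, birkhoffAvg T f n x = 1 := by
    intro x hx
    simp only [birkhoffAvg]
    have : ∀ i ∈ Finset.Icc 1 n, f ((⇑T)^[i] x) = 1 := by
      intro i hi
      rw [Finset.mem_Icc] at hi
      rw [hfdef]
      exact Set.indicator_of_mem (hGA x hx i hi.1 hi.2) _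
    rw [Finset.sum_congr rfl this, Finset.sum_const, Nat.card_Icc]
    simp only [Nat.add_sub_cancel, nsmul_eq_mul, mul_one]
    rw [inv_mul_cancel₀ (by positivity : (n:ℝ) ≠ 0)]
  have hptwise : ∀ x, G.indicator (fun _ => (1/2 : ℝ)) x ≤ max (h x) 0 := by
    intro x
    by_cases hx : x ∈ G
    · rw [Set.indicator_of_mem hx]
      have : h x = 1/2 := by rw [hhdef]; simp only [hgone x hx]; norm_num
      rw [this]
      exact le_max_left _ _
    · rw [Set.indicator_of_notMem hx]
      exact le_max_right _ _
  have hlow : (1/2 : ℝ) * (μ G).toReal ≤ ∫ x, max (h x) 0 ∂μ := by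
    have hindInt : Integrable (G.indicator fun _ => (1/2:ℝ)) μ :=
      (integrable_const _).indicator hG
    calc (1/2 : ℝ) * (μ G).toReal = ∫ x, G.indicator (fun _ => (1/2:ℝ)) x ∂μ := by
          rw [integral_indicator_const _ hG]
          rw [smul_eq_mul, mul_comm, measureReal_def]
      _ ≤ ∫ x, max (h x) 0 ∂μ := integral_mono hindInt hposInt hptwise
  calc (μ G).toReal = 2 * ((1/2:ℝ) * (μ G).toReal) := by ring
    _ ≤ 2 * ∫ x, max (h x) 0 ∂μ := by linarith
    _ = ∫ x, |h x| ∂μ := habs_int.symm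
    _ = ∫ x, |birkhoffAvg T f n x - 1/2| ∂μ := rfl


/-- For an aperiodic automorphism of a nonatomic standard Borel probability space and a
positive sequence `ψ(N) → 0`, there are a set `A` of measure `1/2` and times `N_j → ∞` with
`‖f_{N_j}(T,·) − 1/2‖_{L¹} ≥ 2^{-j-2}` while `ψ(N_j) ≤ 2^{-j-2}/j`, for `f = χ_A`. -/
theorem slow_L1_convergence_quantitative
    {X : Type*} [MeasurableSpace X] [StandardBorelSpace X]
    (μ : Measure X) [IsProbabilityMeasure μ] [NullSingletonClass μ]
    (T : X ≃ᵐ X) (hT : MeasurePreserving T μ μ)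
    (hTaper : μ {x | ∃ n, 1 ≤ n ∧ (⇑T)^[n] x = x} = 0)
    (ψ : ℕ → ℝ) (hψpos : ∀ N, 0 < ψ N) (hψ0 : Tendsto ψ atTop (nhds 0)) :
    ∃ A : Set X, MeasurableSet A ∧ μ A = 1 / 2 ∧
      ∃ N : ℕ → ℕ, StrictMono N ∧ (∀ j, 0 < N j) ∧
        ∀ j, 1 ≤ j →
          ((2 : ℝ)⁻¹) ^ (j + 2)
              ≤ ∫ x, |birkhoffAvg T (A.indicator (fun _ => (1 : ℝ))) (N j) x - 1 / 2| ∂μ ∧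
            ψ (N j) ≤ ((2 : ℝ)⁻¹) ^ (j + 2) / j := by
  classical
  -- Step 1: the times N_j
  have hev : ∀ j : ℕ, ∃ m : ℕ, ∀ N ≥ m, ψ N < ((2:ℝ)⁻¹) ^ ((j+1) + 2) / (j+1) := by
    intro j
    have hpos : (0:ℝ) < ((2:ℝ)⁻¹) ^ ((j+1) + 2) / (j+1) := by positivity
    exact eventually_atTop.1 (hψ0.eventually_lt_const hpos)
  choose m hm using hev
  set Ns : ℕ → ℕ := fun j => Nat.rec 1 (fun j' prev => max (m j') prev + 1) j with hNs
  have hNs_succ : ∀ j, Ns (j+1) = max (m j) (Ns j) + 1 := fun j => rfl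
  have hNs_mono : StrictMono Ns := by
    apply strictMono_nat_of_lt_succ
    intro j
    rw [hNs_succ]
    omega
  have hNs_pos : ∀ j, 0 < Ns j := by
    intro j
    induction j with
    | zero => exact Nat.one_pos
    | succ j ih => rw [hNs_succ]; omega
  have hψNs : ∀ j : ℕ, ψ (Ns (j+1)) < ((2:ℝ)⁻¹) ^ ((j+1) + 2) / (j+1) := by
    intro j
    exact hm j (Ns (j+1)) (by rw [hNs_succ]; omega)
  -- Step 2: the Rokhlin towers and their shrunk bases
  set β : ℕ → ℝ≥0∞ := fun j => 3⁻¹ * ((Ns j : ℝ≥0∞))⁻¹ * (2⁻¹) ^ (j + 2) with hβ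
  have hn0 : ∀ j, ((Ns j : ℕ) : ℝ≥0∞) ≠ 0 := fun j => Nat.cast_ne_zero.2 (hNs_pos j).ne'
  have hnt : ∀ j, ((Ns j : ℕ) : ℝ≥0∞) ≠ ⊤ := fun j => ENNReal.natCast_ne_top _
  have hrok : ∀ j : ℕ, ∃ B : Set X, B ⊆ univ ∧ MeasurableSet B ∧
      RTower T (5 * Ns j) B ∧ μ B = β j := by
    intro j
    obtain ⟨F, hFmeas, hFtow, hFge⟩ :=
      rokhlin μ T hT hTaper (n := 5 * Ns j) (by have := hNs_pos j; omega)
    have hβle : β j ≤ μ F := by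
      refine le_trans ?_ hFge
      simp only [hβ]
      have hcast : (2 : ℝ≥0∞) * ((5 * Ns j : ℕ) : ℝ≥0∞) = 10 * (Ns j : ℝ≥0∞) := by
        push_cast
        ring
      rw [hcast]
      have h10 : (10 * (Ns j : ℝ≥0∞))⁻¹ = 10⁻¹ * (Ns j : ℝ≥0∞)⁻¹ :=
        ENNReal.mul_inv (Or.inl (by norm_num)) (Or.inl (by norm_num))
      rw [h10]
      rw [mul_comm (3:ℝ≥0∞)⁻¹ ((Ns j : ℝ≥0∞))⁻¹, mul_assoc]
      rw [mul_comm (10:ℝ≥0∞)⁻¹ ((Ns j : ℝ≥0∞))⁻¹]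
      refine mul_le_mul_right ?_ _
      -- 3⁻¹ * 2⁻¹^(j+2) ≤ 10⁻¹
      have h1 : ((2:ℝ≥0∞)⁻¹) ^ (j + 2) ≤ (2⁻¹) ^ 2 := by
        apply pow_le_pow_right_of_le_one' (ENNReal.inv_le_one.2 (by norm_num))
        omega
      calc (3:ℝ≥0∞)⁻¹ * (2⁻¹) ^ (j+2) ≤ 3⁻¹ * (2⁻¹)^2 := mul_le_mul_right h1 _
        _ ≤ 10⁻¹ := by
            rw [show ((2:ℝ≥0∞)⁻¹)^2 = 4⁻¹ by
              rw [pow_two, ← ENNReal.mul_inv (Or.inl (by norm_num)) (Or.inl (by norm_num))]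
              norm_num]
            rw [← ENNReal.mul_inv (Or.inl (by norm_num)) (Or.inl (by norm_num))]
            exact ENNReal.inv_le_inv.2 (by norm_num)
    obtain ⟨B, hBsub, hBmeas, hBeq⟩ := exists_subset_measure_eq' μ hFmeas hβle
    exact ⟨B, subset_univ _, hBmeas, hFtow.mono hBsub, hBeq⟩
  choose B _ hBmeas hBtow hBμ using hrok
  -- Step 3: the blocks and the good sets
  set Ablock : ℕ → Set X := fun j => ⋃ i ∈ Finset.Ico (Ns j) (5 * Ns j), Lv T i (B j)
    with hAblock
  set G : ℕ → Set X := fun j => ⋃ i ∈ Finset.Ico (Ns j) (4 * Ns j), Lv T i (B j) with hG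
  have hAblock_meas : ∀ j, MeasurableSet (Ablock j) := fun j =>
    MeasurableSet.biUnion (to_countable _) fun i _ => Lv_measurableSet T i (hBmeas j)
  have hG_meas : ∀ j, MeasurableSet (G j) := fun j =>
    MeasurableSet.biUnion (to_countable _) fun i _ => Lv_measurableSet T i (hBmeas j)
  -- measure of a union of levels with indices in a finset contained in [0, 5n)
  have hlevels : ∀ j : ℕ, ∀ s : Finset ℕ, (∀ i ∈ s, i < 5 * Ns j) →
      μ (⋃ i ∈ s, Lv T i (B j)) = (s.card : ℝ≥0∞) * β j := by
    intro j s hs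
    have hdisj : (↑s : Set ℕ).Pairwise (Function.onFun Disjoint fun i => Lv T i (B j)) := by
      intro i hi i' hi' hne
      rw [Function.onFun, Set.disjoint_iff_inter_eq_empty]
      rcases lt_or_gt_of_ne hne with hlt | hlt
      · exact (hBtow j).levels_disj hlt (hs i' hi')
      · rw [inter_comm]; exact (hBtow j).levels_disj hlt (hs i hi)
    rw [measure_biUnion_finset hdisj fun i _ => Lv_measurableSet T i (hBmeas j)]
    rw [Finset.sum_congr rfl fun i _ => (Lv_measure hT i (hBmeas j)).trans (hBμ j),
      Finset.sum_const, nsmul_eq_mul]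
  have hAblock_μ : ∀ j, μ (Ablock j) = 3⁻¹ * (2⁻¹) ^ j := by
    intro j
    simp only [hAblock]
    have hcard : (Finset.Ico (Ns j) (5 * Ns j)).card = 4 * Ns j := by
      rw [Nat.card_Ico]; omega
    rw [hlevels j _ (fun i hi => (Finset.mem_Ico.1 hi).2), hcard]
    simp only [hβ]
    have : ((4 * Ns j : ℕ) : ℝ≥0∞) = 4 * (Ns j : ℝ≥0∞) := by push_cast; ring
    rw [this]
    rw [show ((2:ℝ≥0∞)⁻¹)^(j+2) = (2⁻¹)^j * 4⁻¹ by
      rw [pow_add, pow_two, ← ENNReal.mul_inv (Or.inl (by norm_num)) (Or.inl (by norm_num))]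
      norm_num]
    calc 4 * (Ns j : ℝ≥0∞) * (3⁻¹ * ((Ns j : ℝ≥0∞))⁻¹ * ((2⁻¹)^j * 4⁻¹))
        = (4 * 4⁻¹) * ((Ns j : ℝ≥0∞) * ((Ns j : ℝ≥0∞))⁻¹) * (3⁻¹ * (2⁻¹)^j) := by ring
      _ = 3⁻¹ * (2⁻¹)^j := by
          rw [ENNReal.mul_inv_cancel (by norm_num) (by norm_num),
            ENNReal.mul_inv_cancel (hn0 j) (hnt j), one_mul, one_mul]
  have hG_μ : ∀ j, μ (G j) = (2⁻¹ : ℝ≥0∞) ^ (j + 2) := by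
    intro j
    simp only [hG]
    have hcard : (Finset.Ico (Ns j) (4 * Ns j)).card = 3 * Ns j := by
      rw [Nat.card_Ico]; omega
    have h5 : ∀ i ∈ Finset.Ico (Ns j) (4 * Ns j), i < 5 * Ns j := by
      intro i hi
      have := (Finset.mem_Ico.1 hi).2
      omega
    rw [hlevels j _ h5, hcard]
    simp only [hβ]
    have : ((3 * Ns j : ℕ) : ℝ≥0∞) = 3 * (Ns j : ℝ≥0∞) := by push_cast; ring
    rw [this]
    calc 3 * (Ns j : ℝ≥0∞) * (3⁻¹ * ((Ns j : ℝ≥0∞))⁻¹ * (2⁻¹)^(j+2))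
        = (3 * 3⁻¹) * ((Ns j : ℝ≥0∞) * ((Ns j : ℝ≥0∞))⁻¹) * (2⁻¹)^(j+2) := by ring
      _ = (2⁻¹)^(j+2) := by
          rw [ENNReal.mul_inv_cancel (by norm_num) (by norm_num),
            ENNReal.mul_inv_cancel (hn0 j) (hnt j), one_mul, one_mul]
  -- Step 4: assembling the set A
  set AU : Set X := ⋃ j : ℕ, Ablock (j + 1) with hAU
  have hAU_meas : MeasurableSet AU := MeasurableSet.iUnion fun j => hAblock_meas (j+1)
  have hAU_le : μ AU ≤ 3⁻¹ := by
    calc μ AU ≤ ∑' j : ℕ, μ (Ablock (j+1)) := measure_iUnion_le _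
      _ = ∑' j : ℕ, 3⁻¹ * ((2:ℝ≥0∞)⁻¹) ^ (j+1) := by
          exact tsum_congr fun j => hAblock_μ (j+1)
      _ = 3⁻¹ * ∑' j : ℕ, ((2:ℝ≥0∞)⁻¹) ^ (j+1) := ENNReal.tsum_mul_left
      _ ≤ 3⁻¹ * 1 := by
          refine mul_le_mul_right ?_ _
          have hgeom : ∑' j : ℕ, ((2:ℝ≥0∞)⁻¹) ^ (j+1)
              = 2⁻¹ * ∑' j : ℕ, ((2:ℝ≥0∞)⁻¹) ^ j := by
            rw [← ENNReal.tsum_mul_left]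
            exact tsum_congr fun j => by rw [pow_succ, mul_comm]
          rw [hgeom, ENNReal.tsum_geometric]
          rw [ENNReal.one_sub_inv_two, inv_inv,
            ENNReal.inv_mul_cancel (by norm_num) (by norm_num)]
      _ = 3⁻¹ := mul_one _
  have hAU_half : μ AU ≤ 2⁻¹ :=
    hAU_le.trans (ENNReal.inv_le_inv.2 (by norm_num))
  obtain ⟨Cset, hCsub, hCmeas, hCμ⟩ := exists_subset_measure_eq'
    μ hAU_meas.compl (r := 2⁻¹ - μ AU)
    (by
      rw [measure_compl hAU_meas (measure_ne_top μ _), measure_univ]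
      exact tsub_le_tsub_right (by norm_num) _)
  set A : Set X := AU ∪ Cset with hA
  have hAmeas : MeasurableSet A := hAU_meas.union hCmeas
  have hCdisj : Disjoint AU Cset := by
    refine Disjoint.mono_right hCsub ?_
    exact disjoint_compl_right
  have hAμ : μ A = 1/2 := by
    rw [hA, measure_union hCdisj hCmeas, hCμ, add_tsub_cancel_of_le hAU_half]
    rw [one_div]
  refine ⟨A, hAmeas, hAμ, Ns, hNs_mono, hNs_pos, ?_⟩
  intro j hj
  obtain ⟨k, rfl⟩ : ∃ k, j = k + 1 := ⟨j - 1, by omega⟩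
  constructor
  · -- the integral lower bound
    have hGA : ∀ x ∈ G (k+1), ∀ i, 1 ≤ i → i ≤ Ns (k+1) → (⇑T)^[i] x ∈ A := by
      intro x hx i hi1 hi2
      simp only [hG, mem_iUnion] at hx
      obtain ⟨l, hl, hxl⟩ := hx
      rw [Finset.mem_Ico] at hl
      have hmem := iter_mem_Lv hxl i
      have hin : l + i ∈ Finset.Ico (Ns (k+1)) (5 * Ns (k+1)) :=
        Finset.mem_Ico.2 ⟨by omega, by omega⟩
      have hab : (⇑T)^[i] x ∈ Ablock (k+1) := by
        simp only [hAblock, mem_iUnion]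
        exact ⟨l + i, hin, hmem⟩
      exact Or.inl (mem_iUnion.2 ⟨k, hab⟩)
    have hlow := birkhoff_L1_lower μ T hT hAmeas hAμ (hG_meas (k+1)) (hNs_pos (k+1)) hGA
    refine le_trans (le_of_eq ?_) hlow
    rw [hG_μ (k+1)]
    rw [ENNReal.toReal_pow, ENNReal.toReal_inv]
    norm_num
  · -- the ψ bound
    have h := (hψNs k).le
    push_cast
    exact h
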